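/- The generalized winding number is locally constant: if f, g : ℝ → S¹ are pre-periodic functions with sup_{x ∈ ℝ} |f(x) − g(x)| < 1/8, then the generalized winding numbers of f and g are equal, i.e. for any lifts f̃ of f and g̃ of g, lim_{x→+∞} (f̃(x) − f̃(−x))/(2x) = lim_{x→+∞} (g̃(x) − g̃(−x))/(2x). -/

import Mathlib

open Filter

/-- A continuous function `f : ℝ → ℂ` taking values in the unit circle `S¹` is *pre-periodic*
if for every `ε > 0` there is a positive integer `N` such that
`|f (x + k * N) - f x| < ε` for all integers `k` and all real `x`. -/
def PrePeriodic (f : ℝ → ℂ) : Prop :=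
  Continuous f ∧ (∀ x : ℝ, ‖f x‖ = 1) ∧
    ∀ ε : ℝ, 0 < ε → ∃ N : ℕ, 0 < N ∧
      ∀ (k : ℤ) (x : ℝ), ‖f (x + (k : ℝ) * (N : ℝ)) - f x‖ < ε

/-- `F : ℝ → ℝ` is a lift of `f : ℝ → S¹ ⊆ ℂ` if `F` is continuous and
`f x = e^{2 π i F x}` for all `x`. -/
def IsLift (f : ℝ → ℂ) (F : ℝ → ℝ) : Prop :=
  Continuous F ∧ ∀ x : ℝ, f x = Complex.exp (2 * Real.pi * Complex.I * (F x : ℂ))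


lemma norm_exp_two_pi_sub_one (t : ℝ) :
    ‖Complex.exp (2 * Real.pi * Complex.I * (t : ℂ)) - 1‖ = 2 * |Real.sin (Real.pi * t)| := by
  have hz : (2 * Real.pi * Complex.I * (t : ℂ)) = ((2 * (Real.pi * t) : ℝ) : ℂ) * Complex.I := by
    push_cast; ring
  have hre : (Complex.exp (((2 * (Real.pi * t) : ℝ) : ℂ) * Complex.I) - 1).re
      = Real.cos (2 * (Real.pi * t)) - 1 := by
    simp [Complex.exp_re]
  have him : (Complex.exp (((2 * (Real.pi * t) : ℝ) : ℂ) * Complex.I) - 1).im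
      = Real.sin (2 * (Real.pi * t)) := by
    simp [Complex.exp_im]
  rw [hz, Complex.norm_def, Complex.normSq_apply, hre, him]
  have key : (Real.cos (2 * (Real.pi * t)) - 1) * (Real.cos (2 * (Real.pi * t)) - 1)
      + Real.sin (2 * (Real.pi * t)) * Real.sin (2 * (Real.pi * t))
      = (2 * |Real.sin (Real.pi * t)|) ^ 2 := by
    have h1 := Real.sin_sq_add_cos_sq (2 * (Real.pi * t))
    have h2 := Real.cos_two_mul' (Real.pi * t)
    have h3 := Real.sin_sq_add_cos_sq (Real.pi * t)
    have h4 := sq_abs (Real.sin (Real.pi * t))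
    nlinarith
  rw [key, Real.sqrt_sq (by positivity)]

lemma close_to_int {t : ℝ}
    (h : ‖Complex.exp (2 * Real.pi * Complex.I * (t : ℂ)) - 1‖ < 1 / 8) :
    |t - round t| < 1 / 32 := by
  set s : ℝ := t - round t with hs
  have hsplit : (2 * Real.pi * Complex.I * (t : ℂ))
      = 2 * Real.pi * Complex.I * (s : ℂ) + (round t : ℂ) * (2 * Real.pi * Complex.I) := by
    rw [hs]; push_cast; ring
  rw [hsplit, Complex.exp_add, Complex.exp_int_mul_two_pi_mul_I, mul_one,
    norm_exp_two_pi_sub_one] at h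
  have hs2 : |s| ≤ 1 / 2 := abs_sub_round t
  have habs : |Real.sin (Real.pi * s)| = Real.sin (Real.pi * |s|) := by
    rcases abs_cases s with ⟨h1, h2⟩ | ⟨h1, h2⟩
    · rw [h1, abs_of_nonneg]
      exact Real.sin_nonneg_of_nonneg_of_le_pi (by positivity)
        (by nlinarith [Real.pi_pos])
    · have hneg : Real.sin (Real.pi * s) = -Real.sin (Real.pi * (-s)) := by
        rw [mul_neg, Real.sin_neg, neg_neg]
      rw [h1, hneg, abs_neg, abs_of_nonneg]
      exact Real.sin_nonneg_of_nonneg_of_le_pi (by nlinarith [Real.pi_pos])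
        (by nlinarith [Real.pi_pos])
  have hle : 2 * |s| ≤ Real.sin (Real.pi * |s|) := by
    have hmain := Real.mul_le_sin (x := Real.pi * |s|) (by positivity)
      (by nlinarith [Real.pi_pos])
    have hpi := Real.pi_pos
    calc 2 * |s| = 2 / Real.pi * (Real.pi * |s|) := by field_simp
    _ ≤ _ := hmain
  rw [habs] at h
  linarith

lemma diff_bounded {h : ℝ → ℝ} (hc : Continuous h)
    (hclose : ∀ x, |h x - round (h x)| < 1 / 32) :
    ∀ x, |h x - (round (h 0) : ℝ)| < 1 / 32 := by
  set n : ℤ := round (h 0) with hn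
  have hsub : ∀ x : ℝ, |h x - (n : ℝ)| ≤ 1 / 16 → |h x - (n : ℝ)| < 1 / 32 := by
    intro x hx
    have hm := hclose x
    have heq : round (h x) = n := by
      have h1 : |((round (h x) : ℝ)) - (n : ℝ)| < 1 := by
        have he : (round (h x) : ℝ) - n = (h x - n) - (h x - round (h x)) := by ring
        rw [he]
        calc |(h x - n) - (h x - round (h x))| ≤ |h x - n| + |h x - round (h x)| :=
          abs_sub _ _
        _ < 1 := by linarith
      have h1' : |((round (h x) - n : ℤ) : ℝ)| < 1 := by push_cast; exact h1
      have h2 : |round (h x) - n| < 1 := by exact_mod_cast h1'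
      have h3 := abs_lt.mp h2
      omega
    rw [heq] at hm
    exact hm
  have hA : IsClopen {x : ℝ | |h x - (n : ℝ)| ≤ 1 / 16} := by
    have hcont : Continuous fun x => |h x - (n : ℝ)| := (hc.sub continuous_const).abs
    constructor
    · exact IsClosed.preimage hcont isClosed_Iic
    · have hset : {x : ℝ | |h x - (n : ℝ)| ≤ 1 / 16}
          = (fun x => |h x - (n : ℝ)|) ⁻¹' Set.Iio (1 / 32) := by
        ext x
        constructor
        · intro hx; exact hsub x hx
        · intro hx
          simp only [Set.mem_preimage, Set.mem_Iio] at hx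
          exact hx.le.trans (by norm_num)
      rw [hset]
      exact IsOpen.preimage hcont isOpen_Iio
  have huniv : {x : ℝ | |h x - (n : ℝ)| ≤ 1 / 16} = Set.univ := by
    apply hA.eq_univ
    refine ⟨0, ?_⟩
    have := hclose 0
    rw [← hn] at this
    exact le_of_lt (lt_trans this (by norm_num))
  intro x
  exact hsub x (by have : x ∈ Set.univ := Set.mem_univ x; rw [← huniv] at this; exact this)

/-- The generalized winding number is locally constant: if pre-periodic functions `f` and `g`
satisfy `sup_x |f x - g x| < 1/8`, then their generalized winding numbers coincide. -/
theorem generalized_winding_number_locally_constant (f g : ℝ → ℂ) (F G : ℝ → ℝ) (a b : ℝ)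
    (hf : PrePeriodic f) (hg : PrePeriodic g)
    (hfg : (⨆ x : ℝ, ‖f x - g x‖) < 1 / 8)
    (hF : IsLift f F) (hG : IsLift g G)
    (ha : Tendsto (fun x : ℝ => (F x - F (-x)) / (2 * x)) atTop (nhds a))
    (hb : Tendsto (fun x : ℝ => (G x - G (-x)) / (2 * x)) atTop (nhds b)) :
    a = b := by
  obtain ⟨hfc, hfnorm, -⟩ := hf
  obtain ⟨hgc, hgnorm, -⟩ := hg
  obtain ⟨hFc, hFe⟩ := hF
  obtain ⟨hGc, hGe⟩ := hG
  have hbdd : BddAbove (Set.range fun x : ℝ => ‖f x - g x‖) := by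
    refine ⟨2, ?_⟩
    rintro y ⟨x, rfl⟩
    calc ‖f x - g x‖ ≤ ‖f x‖ + ‖g x‖ := norm_sub_le _ _
    _ = 2 := by rw [hfnorm, hgnorm]; norm_num
  have hlt : ∀ x, ‖f x - g x‖ < 1 / 8 := fun x => lt_of_le_of_lt (le_ciSup hbdd x) hfg
  set h : ℝ → ℝ := fun x => F x - G x with hh
  have hexp : ∀ x, ‖Complex.exp (2 * Real.pi * Complex.I * ((h x : ℝ) : ℂ)) - 1‖ < 1 / 8 := by
    intro x
    have hfx : f x = g x * Complex.exp (2 * Real.pi * Complex.I * ((h x : ℝ) : ℂ)) := by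
      rw [hFe, hGe, ← Complex.exp_add]
      congr 1
      simp only [hh]
      push_cast
      ring
    have hsplit : f x - g x
        = g x * (Complex.exp (2 * Real.pi * Complex.I * ((h x : ℝ) : ℂ)) - 1) := by
      rw [hfx]; ring
    have hn := hlt x
    rw [hsplit, norm_mul, hgnorm, one_mul] at hn
    exact hn
  have hclose : ∀ x, |h x - round (h x)| < 1 / 32 := fun x => close_to_int (hexp x)
  have hbound : ∀ x, |h x - (round (h 0) : ℝ)| < 1 / 32 := diff_bounded (hFc.sub hGc) hclose
  set n : ℤ := round (h 0) with hn
  have hzero : Tendsto (fun x : ℝ => (F x - F (-x)) / (2 * x) - (G x - G (-x)) / (2 * x))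
      atTop (nhds 0) := by
    apply squeeze_zero_norm' (a := fun x : ℝ => (1 / 16) / (2 * x))
    · filter_upwards [eventually_gt_atTop (0 : ℝ)] with x hx
      have hx2 : (0:ℝ) < 2 * x := by linarith
      have hnum : |(F x - F (-x)) - (G x - G (-x))| ≤ 1 / 16 := by
        have h1 := hbound x
        have h2 := hbound (-x)
        have he : (F x - F (-x)) - (G x - G (-x)) = (h x - (n:ℝ)) - (h (-x) - (n:ℝ)) := by
          simp only [hh]; ring
        rw [he]
        calc |(h x - (n:ℝ)) - (h (-x) - (n:ℝ))| ≤ |h x - (n:ℝ)| + |h (-x) - (n:ℝ)| :=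
          abs_sub _ _
        _ ≤ 1 / 16 := by linarith
      have he2 : (F x - F (-x)) / (2 * x) - (G x - G (-x)) / (2 * x)
          = ((F x - F (-x)) - (G x - G (-x))) / (2 * x) := by ring
      rw [Real.norm_eq_abs, he2, abs_div, abs_of_pos hx2]
      gcongr
    · have h0 : Tendsto (fun x : ℝ => (1:ℝ)/32 * x⁻¹) atTop (nhds ((1:ℝ)/32 * 0)) :=
        tendsto_inv_atTop_zero.const_mul _
      rw [mul_zero] at h0
      convert h0 using 2 with x
      ring
  have hab := ha.sub hb
  have := tendsto_nhds_unique hab hzero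
  linarith
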